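/- For the Korányi ball Σ = {(x,y,z) : (x²+y²)² + 16z² = R⁴} in the Heisenberg group, at every non-characteristic point the horizontal mean curvature equals k₀ = 3√(x²+y²)/R², and the characteristic points are (0,0,±R²/4). -/

import Mathlib

noncomputable section

abbrev E3 := ℝ × ℝ × ℝ

def XH (p : E3) : E3 := (1, 0, -p.2.1 / 2)

def YH (p : E3) : E3 := (0, 1, p.1 / 2)

/-- The defining function of the Korányi ball of radius R. -/
def kor (R : ℝ) (p : E3) : ℝ := (p.1 ^ 2 + p.2.1 ^ 2) ^ 2 + 16 * p.2.2 ^ 2 - R ^ 4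

def Xu (R : ℝ) (p : E3) : ℝ := fderiv ℝ (kor R) p (XH p)

def Yu (R : ℝ) (p : E3) : ℝ := fderiv ℝ (kor R) p (YH p)

/-- |𝒳u| for the Korányi ball. -/
def nrm (R : ℝ) (p : E3) : ℝ := Real.sqrt (Xu R p ^ 2 + Yu R p ^ 2)

/-- Horizontal mean curvature k₀ = X(Xu/|𝒳u|) + Y(Yu/|𝒳u|). -/
def k0 (R : ℝ) (p : E3) : ℝ :=
  fderiv ℝ (fun q => Xu R q / nrm R q) p (XH p)
    + fderiv ℝ (fun q => Yu R q / nrm R q) p (YH p)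

/-! ### Auxiliary machinery -/

def gr (a b c : ℝ) : E3 →L[ℝ] ℝ :=
  a • (ContinuousLinearMap.fst ℝ ℝ (ℝ × ℝ))
    + b • ((ContinuousLinearMap.fst ℝ ℝ ℝ).comp (ContinuousLinearMap.snd ℝ ℝ (ℝ × ℝ)))
    + c • ((ContinuousLinearMap.snd ℝ ℝ ℝ).comp (ContinuousLinearMap.snd ℝ ℝ (ℝ × ℝ)))

lemma gr_apply (a b c : ℝ) (v : E3) : gr a b c v = a * v.1 + b * v.2.1 + c * v.2.2 := by
  simp [gr]

lemma congr_clm {f : E3 → ℝ} {L L' : E3 →L[ℝ] ℝ} {p : E3} (h : HasFDerivAt f L p)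
    (e : ∀ v, L' v = L v) : HasFDerivAt f L' p := by
  rwa [show L' = L from ContinuousLinearMap.ext e]

def Af (p : E3) : ℝ := 4 * p.1 * (p.1 ^ 2 + p.2.1 ^ 2) - 16 * p.2.1 * p.2.2

def Bf (p : E3) : ℝ := 4 * p.2.1 * (p.1 ^ 2 + p.2.1 ^ 2) + 16 * p.1 * p.2.2

def Sf (p : E3) : ℝ := Af p ^ 2 + Bf p ^ 2

section grad
variable (p : E3)

lemma hx : HasFDerivAt (fun q : E3 => q.1) (ContinuousLinearMap.fst ℝ ℝ (ℝ × ℝ)) p :=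
  hasFDerivAt_fst

lemma hy : HasFDerivAt (fun q : E3 => q.2.1)
    ((ContinuousLinearMap.fst ℝ ℝ ℝ).comp (ContinuousLinearMap.snd ℝ ℝ (ℝ × ℝ))) p :=
  hasFDerivAt_fst.comp p hasFDerivAt_snd

lemma hz : HasFDerivAt (fun q : E3 => q.2.2)
    ((ContinuousLinearMap.snd ℝ ℝ ℝ).comp (ContinuousLinearMap.snd ℝ ℝ (ℝ × ℝ))) p :=
  hasFDerivAt_snd.comp p hasFDerivAt_snd

lemma hasA : HasFDerivAt Af
    (gr (12 * p.1 ^ 2 + 4 * p.2.1 ^ 2) (8 * p.1 * p.2.1 - 16 * p.2.2) (-16 * p.2.1)) p := by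
  have h := (((hx p).const_mul (4 : ℝ)).mul
      (((hasDerivAt_pow 2 p.1).comp_hasFDerivAt p (hx p)).add
        ((hasDerivAt_pow 2 p.2.1).comp_hasFDerivAt p (hy p)))).sub
    (((hy p).const_mul (16 : ℝ)).mul (hz p))
  refine congr_clm h ?_
  intro v
  simp [gr]
  ring

lemma hasB : HasFDerivAt Bf
    (gr (8 * p.1 * p.2.1 + 16 * p.2.2) (4 * p.1 ^ 2 + 12 * p.2.1 ^ 2) (16 * p.1)) p := by
  have h := (((hy p).const_mul (4 : ℝ)).mul
      (((hasDerivAt_pow 2 p.1).comp_hasFDerivAt p (hx p)).add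
        ((hasDerivAt_pow 2 p.2.1).comp_hasFDerivAt p (hy p)))).add
    (((hx p).const_mul (16 : ℝ)).mul (hz p))
  refine congr_clm h ?_
  intro v
  simp [gr]
  ring

lemma hasKor (R : ℝ) : HasFDerivAt (kor R)
    (gr (4 * p.1 * (p.1 ^ 2 + p.2.1 ^ 2)) (4 * p.2.1 * (p.1 ^ 2 + p.2.1 ^ 2)) (32 * p.2.2)) p := by
  have h := (((hasDerivAt_pow 2 (p.1 ^ 2 + p.2.1 ^ 2)).comp_hasFDerivAt p
      (((hasDerivAt_pow 2 p.1).comp_hasFDerivAt p (hx p)).add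
        ((hasDerivAt_pow 2 p.2.1).comp_hasFDerivAt p (hy p)))).add
    (((hasDerivAt_pow 2 p.2.2).comp_hasFDerivAt p (hz p)).const_mul (16 : ℝ))).sub_const (R ^ 4)

  refine congr_clm h ?_
  intro v
  simp [gr]
  ring

lemma hasS : HasFDerivAt Sf
    (gr (2 * Af p * (12 * p.1 ^ 2 + 4 * p.2.1 ^ 2) + 2 * Bf p * (8 * p.1 * p.2.1 + 16 * p.2.2))
        (2 * Af p * (8 * p.1 * p.2.1 - 16 * p.2.2) + 2 * Bf p * (4 * p.1 ^ 2 + 12 * p.2.1 ^ 2))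
        (2 * Af p * (-16 * p.2.1) + 2 * Bf p * (16 * p.1))) p := by
  have h := ((hasDerivAt_pow 2 (Af p)).comp_hasFDerivAt p (hasA p)).add
    ((hasDerivAt_pow 2 (Bf p)).comp_hasFDerivAt p (hasB p))
  refine congr_clm h ?_
  intro v
  simp [gr]
  ring

end grad

lemma Xu_eq (R : ℝ) (p : E3) : Xu R p = Af p := by
  rw [Xu, (hasKor p R).fderiv, gr_apply]
  simp [XH, Af]
  ring

lemma Yu_eq (R : ℝ) (p : E3) : Yu R p = Bf p := by
  rw [Yu, (hasKor p R).fderiv, gr_apply]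
  simp [YH, Bf]
  ring

/-- For the Korányi ball {(x²+y²)² + 16z² = R⁴} in the Heisenberg group, at every
non-characteristic point the horizontal mean curvature equals 3√(x²+y²)/R², and
the characteristic points are (0,0,±R²/4). -/
theorem koranyi_ball_curvature (R : ℝ) (hR : 0 < R) :
    (∀ p : E3, kor R p = 0 → ¬(Xu R p = 0 ∧ Yu R p = 0) →
      k0 R p = 3 * Real.sqrt (p.1 ^ 2 + p.2.1 ^ 2) / R ^ 2) ∧
    {p : E3 | kor R p = 0 ∧ Xu R p = 0 ∧ Yu R p = 0} =
      {((0:ℝ), (0:ℝ), R ^ 2 / 4), ((0:ℝ), (0:ℝ), -(R ^ 2 / 4))} := by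
  constructor
  · intro p hkor hchar
    rw [Xu_eq, Yu_eq] at hchar
    have hS : 0 < Sf p := by
      rcases not_and_or.mp hchar with h | h
      · have : 0 < Af p ^ 2 := by positivity
        have h2 : 0 ≤ Bf p ^ 2 := sq_nonneg _
        unfold Sf; linarith
      · have : 0 < Bf p ^ 2 := by positivity
        have h2 : 0 ≤ Af p ^ 2 := sq_nonneg _
        unfold Sf; linarith
    have hSne : Sf p ≠ 0 := ne_of_gt hS
    set x := p.1 with hxd
    set y := p.2.1 with hyd
    set z := p.2.2 with hzd
    have hSf : Sf p = 16 * (x ^ 2 + y ^ 2) * R ^ 4 := by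
      have hk : (x ^ 2 + y ^ 2) ^ 2 + 16 * z ^ 2 = R ^ 4 := by
        have := hkor; unfold kor at this; linarith
      unfold Sf Af Bf
      linear_combination (16 * x ^ 2 + 16 * y ^ 2) * hk
    have hR4 : (0:ℝ) < R ^ 4 := by positivity
    have hr2 : 0 < x ^ 2 + y ^ 2 := by nlinarith [hSf ▸ hS, hR4]
    set n := Real.sqrt (Sf p) with hn
    have hnpos : 0 < n := Real.sqrt_pos.mpr hS
    have hn2 : n ^ 2 = Sf p := Real.sq_sqrt hS.le
    have hnval : n = 4 * R ^ 2 * Real.sqrt (x ^ 2 + y ^ 2) := by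
      rw [hn, hSf, show (16 : ℝ) * (x ^ 2 + y ^ 2) * R ^ 4 = (4 * R ^ 2) ^ 2 * (x ^ 2 + y ^ 2) by ring,
        Real.sqrt_mul (by positivity), Real.sqrt_sq (by positivity)]
    -- derivative of the normalized quotients
    have hnne : n ≠ 0 := ne_of_gt hnpos
    have hN : HasFDerivAt (fun q => Real.sqrt (Sf q))
        ((1 / (2 * n)) • (gr (2 * Af p * (12 * x ^ 2 + 4 * y ^ 2) + 2 * Bf p * (8 * x * y + 16 * z))
          (2 * Af p * (8 * x * y - 16 * z) + 2 * Bf p * (4 * x ^ 2 + 12 * y ^ 2))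
          (2 * Af p * (-16 * y) + 2 * Bf p * (16 * x)))) p := (hasS p).sqrt hSne
    have hinv : HasFDerivAt (fun q => (Real.sqrt (Sf q))⁻¹)
        ((-(n ^ 2)⁻¹) • ((1 / (2 * n)) • (gr (2 * Af p * (12 * x ^ 2 + 4 * y ^ 2) + 2 * Bf p * (8 * x * y + 16 * z))
          (2 * Af p * (8 * x * y - 16 * z) + 2 * Bf p * (4 * x ^ 2 + 12 * y ^ 2))
          (2 * Af p * (-16 * y) + 2 * Bf p * (16 * x))))) p :=
      (hasDerivAt_inv hnne).comp_hasFDerivAt p hN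
    have hdA : HasFDerivAt (fun q => Af q * (Real.sqrt (Sf q))⁻¹) _ p := (hasA p).mul hinv
    have hdB : HasFDerivAt (fun q => Bf q * (Real.sqrt (Sf q))⁻¹) _ p := (hasB p).mul hinv
    have e1 : (fun q => Xu R q / nrm R q) = fun q => Af q * (Real.sqrt (Sf q))⁻¹ := by
      funext q
      rw [nrm, Xu_eq, Yu_eq, div_eq_mul_inv]
      rfl
    have e2 : (fun q => Yu R q / nrm R q) = fun q => Bf q * (Real.sqrt (Sf q))⁻¹ := by
      funext q
      rw [nrm, Xu_eq, Yu_eq, div_eq_mul_inv]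
      rfl
    rw [k0, e1, e2, hdA.fderiv, hdB.fderiv]
    simp only [ContinuousLinearMap.add_apply, ContinuousLinearMap.smul_apply, gr_apply,
      smul_eq_mul, XH, YH]
    rw [← hn]
    have hrs : Real.sqrt (x ^ 2 + y ^ 2) ^ 2 = x ^ 2 + y ^ 2 := Real.sq_sqrt hr2.le
    have hSdef : Sf p = Af p ^ 2 + Bf p ^ 2 := rfl
    have hn2' : n ^ 2 = Af p ^ 2 + Bf p ^ 2 := by rw [hn2, hSdef]
    set s := Real.sqrt (x ^ 2 + y ^ 2) with hsdef
    have hns : s ≠ 0 := by positivity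
    -- now pure algebra
    have key : (Af p * (-(n ^ 2)⁻¹ * ((1 / (2 * n)) *
        ((2 * Af p * (12 * x ^ 2 + 4 * y ^ 2) + 2 * Bf p * (8 * x * y + 16 * z)) * 1 +
          (2 * Af p * (8 * x * y - 16 * z) + 2 * Bf p * (4 * x ^ 2 + 12 * y ^ 2)) * 0 +
          (2 * Af p * (-16 * y) + 2 * Bf p * (16 * x)) * (-y / 2)))) +
        n⁻¹ * ((12 * x ^ 2 + 4 * y ^ 2) * 1 + (8 * x * y - 16 * z) * 0 + -16 * y * (-y / 2))) +
        (Bf p * (-(n ^ 2)⁻¹ * ((1 / (2 * n)) *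
        ((2 * Af p * (12 * x ^ 2 + 4 * y ^ 2) + 2 * Bf p * (8 * x * y + 16 * z)) * 0 +
          (2 * Af p * (8 * x * y - 16 * z) + 2 * Bf p * (4 * x ^ 2 + 12 * y ^ 2)) * 1 +
          (2 * Af p * (-16 * y) + 2 * Bf p * (16 * x)) * (x / 2)))) +
        n⁻¹ * ((8 * x * y + 16 * z) * 0 + (4 * x ^ 2 + 12 * y ^ 2) * 1 + 16 * x * (x / 2))) =
        3 * s / R ^ 2 := by
      have step1 : (Af p * (-(n ^ 2)⁻¹ * ((1 / (2 * n)) *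
          ((2 * Af p * (12 * x ^ 2 + 4 * y ^ 2) + 2 * Bf p * (8 * x * y + 16 * z)) * 1 +
            (2 * Af p * (8 * x * y - 16 * z) + 2 * Bf p * (4 * x ^ 2 + 12 * y ^ 2)) * 0 +
            (2 * Af p * (-16 * y) + 2 * Bf p * (16 * x)) * (-y / 2)))) +
          n⁻¹ * ((12 * x ^ 2 + 4 * y ^ 2) * 1 + (8 * x * y - 16 * z) * 0 + -16 * y * (-y / 2))) +
          (Bf p * (-(n ^ 2)⁻¹ * ((1 / (2 * n)) *
          ((2 * Af p * (12 * x ^ 2 + 4 * y ^ 2) + 2 * Bf p * (8 * x * y + 16 * z)) * 0 +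
            (2 * Af p * (8 * x * y - 16 * z) + 2 * Bf p * (4 * x ^ 2 + 12 * y ^ 2)) * 1 +
            (2 * Af p * (-16 * y) + 2 * Bf p * (16 * x)) * (x / 2)))) +
          n⁻¹ * ((8 * x * y + 16 * z) * 0 + (4 * x ^ 2 + 12 * y ^ 2) * 1 + 16 * x * (x / 2))) =
          (24 * (x ^ 2 + y ^ 2) * n ^ 2 - 12 * (x ^ 2 + y ^ 2) * (Af p ^ 2 + Bf p ^ 2)) / n ^ 3 := by
        field_simp
        ring
      rw [step1, ← hn2', hnval, ← hrs]
      have hRne : R ≠ 0 := ne_of_gt hR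
      field_simp
      ring
    convert key using 2 <;> ring
  · ext p
    simp only [Set.mem_setOf_eq, Set.mem_insert_iff, Set.mem_singleton_iff]
    constructor
    · rintro ⟨hk, hx0, hy0⟩
      rw [Xu_eq] at hx0
      rw [Yu_eq] at hy0
      unfold Af at hx0
      unfold Bf at hy0
      have h2 : (p.1 ^ 2 + p.2.1 ^ 2) ^ 2 = 0 := by
        linear_combination p.1 / 4 * hx0 + p.2.1 / 4 * hy0
      have hxy : p.1 ^ 2 + p.2.1 ^ 2 = 0 := by
        nlinarith [sq_nonneg (p.1 ^ 2 + p.2.1 ^ 2)]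
      have hx1 : p.1 = 0 := by nlinarith [sq_nonneg p.1, sq_nonneg p.2.1]
      have hy1 : p.2.1 = 0 := by nlinarith [sq_nonneg p.1, sq_nonneg p.2.1]
      unfold kor at hk
      have hz2 : (p.2.2 - R ^ 2 / 4) * (p.2.2 + R ^ 2 / 4) = 0 := by
        rw [hx1, hy1] at hk; nlinarith [hk]
      rcases mul_eq_zero.mp hz2 with h | h
      · left; refine Prod.ext hx1 (Prod.ext hy1 ?_); simp at h ⊢; linarith
      · right; refine Prod.ext hx1 (Prod.ext hy1 ?_); simp at h ⊢; linarith
    · rintro (rfl | rfl) <;>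
        refine ⟨by unfold kor; norm_num; ring_nf, ?_, ?_⟩ <;>
        simp [Xu_eq, Yu_eq, Af, Bf]

end
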